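/- arXiv:1304.6562 — 6 statements merged into one kernel-verified Lean document; each statement's English description precedes it below -/
import Mathlib

section
/- Property (M2): Let n ≥ 1, let a < b be real numbers (possibly ±∞), and let A : (a,b) → ℝ^{n×n} be a continuous matrix-valued function that is cooperative, i.e. for every t ∈ (a,b) and all indices i ≠ j, the off-diagonal entry A(t)_{ij} is nonnegative. Let x : (a,b) → ℝⁿ be differentiable with x'(t) = A(t) x(t) for all t ∈ (a,b). If t₀ ∈ (a,b) and every coordinate of x(t₀) is strictly positive, then for every t ∈ (t₀, b) every coordinate of x(t) is strictly positive. -/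
open Matrix

/-- Property (M2): for a continuous cooperative linear system `x' = A(t) x` on an open
interval `(a, b)` (with `a`, `b` possibly `±∞`, hence taken in `EReal`), any solution which
has all coordinates strictly positive at some time `t₀` keeps all coordinates strictly
positive for all later times in the interval. -/
theorem cooperative_M2 {n : ℕ} (hn : 1 ≤ n) (a b : EReal) (hab : a < b)
    (A : ℝ → Matrix (Fin n) (Fin n) ℝ)
    (hAcont : ContinuousOn A {t : ℝ | a < (t : EReal) ∧ (t : EReal) < b})
    (hcoop : ∀ t : ℝ, a < (t : EReal) → (t : EReal) < b →
      ∀ i j : Fin n, i ≠ j → 0 ≤ A t i j)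
    (x : ℝ → Fin n → ℝ)
    (hx : ∀ t : ℝ, a < (t : EReal) → (t : EReal) < b →
      HasDerivAt x (A t *ᵥ x t) t)
    (t₀ : ℝ) (ht₀a : a < (t₀ : EReal)) (ht₀b : (t₀ : EReal) < b)
    (hpos : ∀ i, 0 < x t₀ i) :
    ∀ t : ℝ, t₀ < t → (t : EReal) < b → ∀ i, 0 < x t i := by
  intro t₁ ht₀t₁ ht₁b
  -- every point of [t₀, t₁] is in the domain
  have hmem : ∀ u : ℝ, u ∈ Set.Icc t₀ t₁ → a < (u : EReal) ∧ (u : EReal) < b := by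
    intro u hu
    constructor
    · exact lt_of_lt_of_le ht₀a (by exact_mod_cast hu.1)
    · exact lt_of_le_of_lt (by exact_mod_cast hu.2) ht₁b
  -- bound on diagonal entries of A on the compact interval
  have hAbd : ∀ i : Fin n, ∃ M : ℝ, ∀ u ∈ Set.Icc t₀ t₁, -M ≤ A u i i := by
    intro i
    have hc : ContinuousOn (fun u => A u i i) (Set.Icc t₀ t₁) :=
      (continuous_apply_apply i i).comp_continuousOn
        (hAcont.mono (fun u hu => ⟨(hmem u hu).1, (hmem u hu).2⟩))
    obtain ⟨M, hM⟩ := (isCompact_Icc :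
      IsCompact (Set.Icc t₀ t₁)).exists_bound_of_continuousOn hc
    exact ⟨M, fun u hu => by linarith [abs_le.mp (hM u hu) |>.1]⟩
  -- coordinatewise derivative
  have hxi : ∀ u ∈ Set.Icc t₀ t₁, ∀ i : Fin n,
      HasDerivAt (fun s => x s i) ((A u *ᵥ x u) i) u := by
    intro u hu i
    exact hasDerivAt_pi.mp (hx u (hmem u hu).1 (hmem u hu).2) i
  -- continuity of each coordinate
  have hxc : ∀ u ∈ Set.Icc t₀ t₁, ∀ i : Fin n, ContinuousAt (fun s => x s i) u :=
    fun u hu i => (hxi u hu i).continuousAt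
  -- key lemma: if x is nonnegative on [t₀, T], then it is positive at T
  have hmono : ∀ T, T ∈ Set.Icc t₀ t₁ → (∀ u ∈ Set.Icc t₀ T, ∀ j, 0 ≤ x u j) →
      ∀ i, 0 < x T i := by
    intro T hT hnn i
    obtain ⟨M, hAii⟩ := hAbd i
    set g : ℝ → ℝ := fun s => x s i * Real.exp (M * s) with hg_def
    have hsub : Set.Icc t₀ T ⊆ Set.Icc t₀ t₁ :=
      Set.Icc_subset_Icc le_rfl hT.2
    have hg : ∀ u ∈ Set.Icc t₀ t₁,
        HasDerivAt g ((A u *ᵥ x u) i * Real.exp (M * u)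
          + x u i * (Real.exp (M * u) * M)) u := by
      intro u hu
      have he : HasDerivAt (fun s => Real.exp (M * s)) (Real.exp (M * u) * M) u := by
        have := (((hasDerivAt_id u).const_mul M).exp)
        simpa using this
      exact (hxi u hu i).mul he
    have hgmono : MonotoneOn g (Set.Icc t₀ T) := by
      apply monotoneOn_of_deriv_nonneg (convex_Icc _ _)
      · exact fun u hu => (hg u (hsub hu)).continuousAt.continuousWithinAt
      · intro u hu
        rw [interior_Icc] at hu
        exact ((hg u (hsub (Set.Ioo_subset_Icc_self hu))).differentiableAt).differentiableWithinAt
      · intro u hu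
        rw [interior_Icc] at hu
        have huI : u ∈ Set.Icc t₀ T := Set.Ioo_subset_Icc_self hu
        rw [(hg u (hsub huI)).deriv]
        have hE : (0:ℝ) < Real.exp (M * u) := Real.exp_pos _
        have hxnn : ∀ j, 0 ≤ x u j := hnn u huI
        have hsum : A u i i * x u i ≤ (A u *ᵥ x u) i := by
          have : (A u *ᵥ x u) i = ∑ j, A u i j * x u j := by
            simp [Matrix.mulVec, dotProduct]
          rw [this, ← Finset.add_sum_erase Finset.univ _ (Finset.mem_univ i)]
          have : 0 ≤ ∑ j ∈ Finset.univ.erase i, A u i j * x u j := by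
            apply Finset.sum_nonneg
            intro j hj
            have hji : j ≠ i := Finset.ne_of_mem_erase hj
            exact mul_nonneg
              (hcoop u (hmem u (hsub huI)).1 (hmem u (hsub huI)).2 i j hji.symm) (hxnn j)
          linarith
        have hAi : -M ≤ A u i i := hAii u (hsub huI)
        have h1 : -M * x u i ≤ A u i i * x u i :=
          mul_le_mul_of_nonneg_right hAi (hxnn i)
        nlinarith [mul_le_mul_of_nonneg_right (le_trans h1 hsum) hE.le, hxnn i]
    have hle : g t₀ ≤ g T :=
      hgmono (Set.left_mem_Icc.mpr hT.1) (Set.right_mem_Icc.mpr hT.1) hT.1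
    have h0 : 0 < g t₀ := mul_pos (hpos i) (Real.exp_pos _)
    have h1 : 0 < x T i * Real.exp (M * T) := lt_of_lt_of_le h0 hle
    nlinarith [Real.exp_pos (M * T)]
  -- the supremum argument
  set S : Set ℝ := {s | s ∈ Set.Icc t₀ t₁ ∧ ∀ u ∈ Set.Icc t₀ s, ∀ i, 0 < x u i} with hS_def
  have hS0 : t₀ ∈ S := by
    refine ⟨⟨le_rfl, ht₀t₁.le⟩, fun u hu i => ?_⟩
    have : u = t₀ := le_antisymm hu.2 hu.1
    rw [this]; exact hpos i
  have hbdd : BddAbove S := ⟨t₁, fun s hs => hs.1.2⟩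
  set T := sSup S with hT_def
  have hT₀T : t₀ ≤ T := le_csSup hbdd hS0
  have hTt₁ : T ≤ t₁ := csSup_le ⟨t₀, hS0⟩ (fun s hs => hs.1.2)
  have lemA : ∀ u, t₀ ≤ u → u < T → ∀ i, 0 < x u i := by
    intro u hu hut i
    obtain ⟨s, hsS, hus⟩ := exists_lt_of_lt_csSup ⟨t₀, hS0⟩ hut
    exact hsS.2 u ⟨hu, hus.le⟩ i
  have lemB : ∀ u ∈ Set.Icc t₀ T, ∀ i, 0 ≤ x u i := by
    intro u hu i
    rcases lt_or_eq_of_le hu.2 with h | h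
    · exact (lemA u hu.1 h i).le
    · rw [h]
      rw [h] at hu
      rcases eq_or_lt_of_le hu.1 with h' | h'
      · rw [← h']; exact (hpos i).le
      · have hc : ContinuousAt (fun s => x s i) T := hxc T ⟨hu.1, hTt₁⟩ i
        have htd : Filter.Tendsto (fun s => x s i) (nhdsWithin T (Set.Iio T))
            (nhds (x T i)) := hc.tendsto.mono_left nhdsWithin_le_nhds
        have hev : ∀ᶠ s in nhdsWithin T (Set.Iio T), 0 ≤ x s i := by
          filter_upwards [Ioo_mem_nhdsLT_of_mem (Set.mem_Ioc.mpr ⟨h', le_rfl⟩)] with s hs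
          exact (lemA s hs.1.le hs.2 i).le
        exact ge_of_tendsto htd hev
  have lemC : ∀ u ∈ Set.Icc t₀ T, ∀ i, 0 < x u i := by
    intro u hu i
    rcases lt_or_eq_of_le hu.2 with h | h
    · exact lemA u hu.1 h i
    · rw [h]
      exact hmono T ⟨hT₀T, hTt₁⟩ (fun v hv j => lemB v hv j) i
  -- T must equal t₁
  have hTeq : T = t₁ := by
    by_contra hne
    have hTlt : T < t₁ := lt_of_le_of_ne hTt₁ hne
    have hev : ∀ᶠ u in nhds T, ∀ i, 0 < x u i := by
      rw [Filter.eventually_all]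
      intro i
      have hc : ContinuousAt (fun s => x s i) T := hxc T ⟨hT₀T, hTt₁⟩ i
      exact hc (Ioi_mem_nhds (lemC T ⟨hT₀T, le_rfl⟩ i))
    obtain ⟨δ, hδ, hδ'⟩ := Metric.eventually_nhds_iff.mp hev
    set s := min t₁ (T + δ / 2) with hs_def
    have hTs : T < s := lt_min hTlt (by linarith)
    have hsS : s ∈ S := by
      refine ⟨⟨hT₀T.trans hTs.le, min_le_left _ _⟩, fun u hu i => ?_⟩
      rcases le_or_gt u T with h | h
      · exact lemC u ⟨hu.1, h⟩ i
      · apply hδ'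
        have hus : u ≤ T + δ / 2 := le_trans hu.2 (min_le_right _ _)
        rw [Real.dist_eq, abs_of_pos (by linarith)]
        linarith
    exact absurd (le_csSup hbdd hsS) (not_le.mpr hTs)
  exact lemC t₁ ⟨ht₀t₁.le, hTeq.ge⟩
end

section
/- Property (M1): Let n ≥ 1, let a < b be real numbers (possibly ±∞), and let A : (a,b) → ℝ^{n×n} be a continuous matrix-valued function that is cooperative, i.e. for every t ∈ (a,b) and all indices i ≠ j, the off-diagonal entry A(t)_{ij} is nonnegative. Let x : (a,b) → ℝⁿ be differentiable with x'(t) = A(t) x(t) for all t ∈ (a,b). If t₀ ∈ (a,b) and every coordinate of x(t₀) is nonnegative, then for every t ∈ (t₀, b) every coordinate of x(t) is nonnegative. -/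
open Matrix Set Filter Topology

/-- Property (M1): for a continuous cooperative linear system `x' = A(t) x` on an open
interval `(a, b)` (with `a`, `b` possibly `±∞`, hence taken in `EReal`), any solution which
has all coordinates nonnegative at some time `t₀` keeps all coordinates nonnegative for all
later times in the interval. -/
theorem cooperative_M1 {n : ℕ} (hn : 1 ≤ n) (a b : EReal) (hab : a < b)
    (A : ℝ → Matrix (Fin n) (Fin n) ℝ)
    (hAcont : ContinuousOn A {t : ℝ | a < (t : EReal) ∧ (t : EReal) < b})
    (hcoop : ∀ t : ℝ, a < (t : EReal) → (t : EReal) < b →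
      ∀ i j : Fin n, i ≠ j → 0 ≤ A t i j)
    (x : ℝ → Fin n → ℝ)
    (hx : ∀ t : ℝ, a < (t : EReal) → (t : EReal) < b →
      HasDerivAt x (A t *ᵥ x t) t)
    (t₀ : ℝ) (ht₀a : a < (t₀ : EReal)) (ht₀b : (t₀ : EReal) < b)
    (hnn : ∀ i, 0 ≤ x t₀ i) :
    ∀ t : ℝ, t₀ < t → (t : EReal) < b → ∀ i, 0 ≤ x t i := by
  intro t₁ ht₀t₁ ht₁b i
  have hsub : Icc t₀ t₁ ⊆ {t : ℝ | a < (t : EReal) ∧ (t : EReal) < b} := by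
    intro t ht
    refine ⟨lt_of_lt_of_le ht₀a ?_, lt_of_le_of_lt ?_ ht₁b⟩
    · exact_mod_cast ht.1
    · exact_mod_cast ht.2
  -- bound on entries of A over the compact interval
  set g : ℝ → ℝ := fun t => ∑ p : Fin n × Fin n, |A t p.1 p.2| with hg
  have hgcont : ContinuousOn g (Icc t₀ t₁) := by
    apply continuousOn_finset_sum
    intro p _
    exact (((continuous_apply p.2).comp (continuous_apply p.1)).comp_continuousOn
      (hAcont.mono hsub)).abs
  obtain ⟨tm, htm, hmax'⟩ := isCompact_Icc.exists_isMaxOn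
    ⟨t₀, le_refl _, le_of_lt ht₀t₁⟩ hgcont
  have hmax : ∀ t ∈ Icc t₀ t₁, g t ≤ g tm := fun t ht => hmax' ht
  set K : ℝ := g tm + 1 with hK
  have hgnn : ∀ t, 0 ≤ g t := fun t => Finset.sum_nonneg fun p _ => abs_nonneg _
  have hK1 : (1 : ℝ) ≤ K := by have := hgnn tm; simp [hK]; linarith
  have hAb : ∀ t ∈ Icc t₀ t₁, ∀ i j : Fin n, |A t i j| ≤ K := by
    intro t ht i j
    have h1 : |A t i j| ≤ g t :=
      Finset.single_le_sum (f := fun p : Fin n × Fin n => |A t p.1 p.2|)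
        (fun p _ => abs_nonneg _) (Finset.mem_univ (i, j))
    have := hmax t ht
    simp only [hK]; linarith
  have hn1 : (1 : ℝ) ≤ (n : ℝ) := by exact_mod_cast hn
  set M : ℝ := 2 * (n : ℝ) * K with hM
  have hMpos : 0 < M := by positivity
  -- the perturbed functions stay positive
  have key : ∀ ε : ℝ, 0 < ε → ∀ t ∈ Icc t₀ t₁, ∀ j,
      0 < x t j + ε * Real.exp (M * (t - t₀)) := by
    intro ε hε
    by_contra hcon
    push_neg at hcon
    obtain ⟨t', ht', j', hj'⟩ := hcon
    set φ : Fin n → ℝ → ℝ := fun j t => x t j + ε * Real.exp (M * (t - t₀)) with hφ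
    have hφcont : ∀ j, ContinuousOn (φ j) (Icc t₀ t₁) := by
      intro j
      intro t ht
      have hta := hsub ht
      have hxc : ContinuousAt (fun s => x s j) t :=
        (continuous_apply j).continuousAt.comp (hx t hta.1 hta.2).continuousAt
      exact (hxc.add (by fun_prop)).continuousWithinAt
    set S : Set ℝ := ⋃ j, (Icc t₀ t₁ ∩ (φ j) ⁻¹' Iic 0) with hS
    have hScl : IsClosed S := by
      apply isClosed_iUnion_of_finite
      intro j
      exact (hφcont j).preimage_isClosed_of_isClosed isClosed_Icc isClosed_Iic
    have hSne : S.Nonempty := ⟨t', mem_iUnion.2 ⟨j', ht', hj'⟩⟩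
    have hSmem : ∀ s ∈ S, s ∈ Icc t₀ t₁ := by
      intro s hs; obtain ⟨j, hj1, _⟩ := mem_iUnion.1 hs; exact hj1
    have hSbd : BddBelow S := ⟨t₀, fun s hs => (hSmem s hs).1⟩
    set τ := sInf S with hτ
    have hτS : τ ∈ S := hScl.csInf_mem hSne hSbd
    have hτIcc : τ ∈ Icc t₀ t₁ := hSmem τ hτS
    have ht₀S : t₀ ∉ S := by
      intro h
      obtain ⟨j, _, hj2⟩ := mem_iUnion.1 h
      have : φ j t₀ = x t₀ j + ε := by simp [hφ]
      have := hnn j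
      simp only [mem_preimage, mem_Iic] at hj2
      rw [hφ] at hj2; simp at hj2
      linarith
    have hτt₀ : t₀ < τ := lt_of_le_of_ne hτIcc.1 (fun h => ht₀S (h ▸ hτS))
    have hbefore : ∀ t ∈ Ico t₀ τ, ∀ j, 0 < φ j t := by
      intro t ht j
      by_contra hc
      push_neg at hc
      have htS : t ∈ S := mem_iUnion.2 ⟨j, ⟨ht.1, le_trans (le_of_lt ht.2) hτIcc.2⟩, hc⟩
      exact notMem_of_lt_csInf ht.2 hSbd htS
    have hτab := hsub hτIcc
    -- nonnegativity of all coordinates at τ, by continuity from the left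
    have hτle : ∀ j, 0 ≤ φ j τ := by
      intro j
      have hsub' : Ioo t₀ τ ⊆ Icc t₀ t₁ :=
        Ioo_subset_Icc_self.trans (Icc_subset_Icc_right hτIcc.2)
      have hc : Tendsto (φ j) (𝓝[<] τ) (𝓝 (φ j τ)) := by
        have h := (hφcont j τ hτIcc).mono_left (nhdsWithin_mono τ hsub')
        rwa [nhdsWithin_Ioo_eq_nhdsLT hτt₀] at h
      refine ge_of_tendsto hc ?_
      filter_upwards [Ioo_mem_nhdsLT hτt₀] with s hs
      exact le_of_lt (hbefore s ⟨le_of_lt hs.1, hs.2⟩ j)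
    obtain ⟨j, _, hj0⟩ := mem_iUnion.1 hτS
    simp only [mem_preimage, mem_Iic] at hj0
    have hφτ : φ j τ = 0 := le_antisymm hj0 (hτle j)
    -- the derivative of φ j at τ
    have hdx : HasDerivAt (fun s => x s j) ((A τ *ᵥ x τ) j) τ :=
      hasDerivAt_pi.1 (hx τ hτab.1 hτab.2) j
    have hde : HasDerivAt (fun s : ℝ => ε * Real.exp (M * (s - t₀)))
        (ε * (Real.exp (M * (τ - t₀)) * M)) τ := by
      have h1 : HasDerivAt (fun s : ℝ => M * (s - t₀)) M τ := by
        simpa using ((hasDerivAt_id τ).sub_const t₀).const_mul M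
      exact (h1.exp).const_mul ε
    set E : ℝ := Real.exp (M * (τ - t₀)) with hE
    have hEpos : 0 < E := Real.exp_pos _
    set d : ℝ := (A τ *ᵥ x τ) j + ε * (E * M) with hd
    have hφd : HasDerivAt (φ j) d τ := hdx.add hde
    -- derivative at the first zero is ≤ 0
    have hdle : d ≤ 0 := by
      have hs : Tendsto (slope (φ j) τ) (𝓝[<] τ) (𝓝 d) :=
        (hasDerivAt_iff_tendsto_slope.1 hφd).mono_left
          (nhdsWithin_mono τ (fun s hs => ne_of_lt hs))
      refine le_of_tendsto hs ?_
      filter_upwards [Ioo_mem_nhdsLT hτt₀] with s hs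
      have h1 : 0 < φ j s := hbefore s ⟨le_of_lt hs.1, hs.2⟩ j
      have h2 : s - τ < 0 := sub_neg.2 hs.2
      rw [slope_def_field, hφτ, sub_zero]
      exact le_of_lt (div_neg_of_pos_of_neg h1 h2)
    -- but cooperativity forces the derivative to be positive, contradiction
    have hxτj : x τ j = -(ε * E) := by
      have := hφτ; simp only [hφ, ← hE] at this; linarith
    have hterm : ∀ k : Fin n, -(K * (ε * E)) ≤ A τ j k * x τ k := by
      intro k
      have hp : (0 : ℝ) ≤ ε * E := le_of_lt (mul_pos hε hEpos)
      by_cases hkj : k = j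
      · have habs := hAb τ hτIcc j j
        obtain ⟨h1, h2⟩ := abs_le.1 habs
        rw [hkj, hxτj]
        nlinarith [mul_le_mul_of_nonneg_right h2 hp]
      · have hA0 : 0 ≤ A τ j k := hcoop τ hτab.1 hτab.2 j k (Ne.symm hkj)
        have hAK : A τ j k ≤ K := (abs_le.1 (hAb τ hτIcc j k)).2
        have hxk : -(ε * E) ≤ x τ k := by
          have := hτle k; simp only [hφ, ← hE] at this; linarith
        nlinarith [mul_le_mul_of_nonneg_left hxk hA0, mul_le_mul_of_nonneg_right hAK hp]
    have hsum : -((n : ℝ) * (K * (ε * E))) ≤ (A τ *ᵥ x τ) j := by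
      have h1 : (A τ *ᵥ x τ) j = ∑ k, A τ j k * x τ k := by
        simp [Matrix.mulVec, dotProduct]
      rw [h1]
      calc -((n : ℝ) * (K * (ε * E))) = ∑ _k : Fin n, -(K * (ε * E)) := by
            rw [Finset.sum_const, Finset.card_univ, Fintype.card_fin, nsmul_eq_mul]; ring
        _ ≤ ∑ k, A τ j k * x τ k := Finset.sum_le_sum fun k _ => hterm k
    have hdpos : 0 < d := by
      have : ε * (E * M) = 2 * ((n : ℝ) * (K * (ε * E))) := by rw [hM]; ring
      have hpos : 0 < (n : ℝ) * (K * (ε * E)) := by positivity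
      rw [hd, this]
      linarith
    linarith
  -- let ε → 0
  have ht₁Icc : t₁ ∈ Icc t₀ t₁ := ⟨le_of_lt ht₀t₁, le_refl _⟩
  have hE₁pos : 0 < Real.exp (M * (t₁ - t₀)) := Real.exp_pos _
  have hfin : ∀ δ : ℝ, 0 < δ → -(x t₁ i) ≤ 0 + δ := by
    intro δ hδ
    have h := key (δ / Real.exp (M * (t₁ - t₀))) (by positivity) t₁ ht₁Icc i
    have h2 : δ / Real.exp (M * (t₁ - t₀)) * Real.exp (M * (t₁ - t₀)) = δ :=
      div_mul_cancel₀ δ (ne_of_gt hE₁pos)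
    linarith
  have := le_of_forall_pos_le_add hfin
  linarith
end

section
/- Key differential inequality for the coordinate product: Let n ≥ 1, let a < b be real numbers (possibly ±∞), and let A : (a,b) → ℝ^{n×n} be a continuous matrix-valued function that is cooperative, i.e. for every t ∈ (a,b) and all indices i ≠ j, the off-diagonal entry A(t)_{ij} is nonnegative. Let x : (a,b) → ℝⁿ be differentiable with x'(t) = A(t) x(t) for all t ∈ (a,b), and define ξ(t) := ∏_{i=1}^n x_i(t). Then ξ is differentiable, and at every t ∈ (a,b) such that all coordinates of x(t) are nonnegative, one has ξ'(t) ≥ trace(A(t)) · ξ(t). -/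
open Matrix

/-- Key differential inequality: for a continuous cooperative linear system `x' = A(t) x`
on an open interval `(a, b)` (with `a`, `b` possibly `±∞`, hence taken in `EReal`), the
product `ξ(t) = ∏ i, xᵢ(t)` of the coordinates of a solution is differentiable on the
interval, and at every point of the interval where all coordinates of `x(t)` are
nonnegative one has `ξ'(t) ≥ trace (A t) * ξ t`. -/
theorem cooperative_product_diff_ineq {n : ℕ} (hn : 1 ≤ n) (a b : EReal) (hab : a < b)
    (A : ℝ → Matrix (Fin n) (Fin n) ℝ)
    (hAcont : ContinuousOn A {t : ℝ | a < (t : EReal) ∧ (t : EReal) < b})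
    (hcoop : ∀ t : ℝ, a < (t : EReal) → (t : EReal) < b →
      ∀ i j : Fin n, i ≠ j → 0 ≤ A t i j)
    (x : ℝ → Fin n → ℝ)
    (hx : ∀ t : ℝ, a < (t : EReal) → (t : EReal) < b →
      HasDerivAt x (A t *ᵥ x t) t)
    (ξ : ℝ → ℝ) (hξ : ξ = fun t => ∏ i, x t i) :
    ∀ t : ℝ, a < (t : EReal) → (t : EReal) < b →
      DifferentiableAt ℝ ξ t ∧
      ((∀ i, 0 ≤ x t i) → Matrix.trace (A t) * ξ t ≤ deriv ξ t) := by
  intro t hta htb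
  have hcoord : ∀ i, HasDerivAt (fun s => x s i) ((A t *ᵥ x t) i) t :=
    hasDerivAt_pi.mp (hx t hta htb)
  have hprod : HasDerivAt (fun s => ∏ i, x s i)
      (∑ i, (∏ j ∈ Finset.univ.erase i, x t j) • ((A t *ᵥ x t) i)) t :=
    HasDerivAt.fun_finsetProd (fun i _ => hcoord i)
  rw [hξ]
  refine ⟨hprod.differentiableAt, ?_⟩
  intro hpos
  rw [hprod.deriv]
  have hPnn : ∀ i : Fin n, 0 ≤ ∏ j ∈ Finset.univ.erase i, x t j := fun i =>
    Finset.prod_nonneg fun j _ => hpos j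
  rw [Matrix.trace, Finset.sum_mul]
  refine Finset.sum_le_sum fun i _ => ?_
  have hsum : A t i i * x t i ≤ (A t *ᵥ x t) i := by
    rw [Matrix.mulVec, dotProduct]
    calc A t i i * x t i
        = ∑ j, if j = i then A t i j * x t j else 0 := by simp
      _ ≤ ∑ j, A t i j * x t j := by
          refine Finset.sum_le_sum fun j _ => ?_
          by_cases hji : j = i
          · simp [hji]
          · simp only [hji, if_false]
            exact mul_nonneg (hcoop t hta htb i j (Ne.symm hji)) (hpos j)
  have hfactor : (∏ j, x t j) = x t i * ∏ j ∈ Finset.univ.erase i, x t j :=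
    (Finset.mul_prod_erase Finset.univ _ (Finset.mem_univ i)).symm
  calc Matrix.diag (A t) i * ∏ j, x t j
      = (A t i i * x t i) * ∏ j ∈ Finset.univ.erase i, x t j := by
        rw [hfactor, Matrix.diag]; ring
    _ ≤ (A t *ᵥ x t) i * ∏ j ∈ Finset.univ.erase i, x t j :=
        mul_le_mul_of_nonneg_right hsum (hPnn i)
    _ = (∏ j ∈ Finset.univ.erase i, x t j) • ((A t *ᵥ x t) i) := by
        simp [smul_eq_mul, mul_comm]
end

section
/- Exponential lower bound for the coordinate product: Let n ≥ 1, let a < b be real numbers (possibly ±∞), let A : (a,b) → ℝ^{n×n} be continuous and cooperative (all off-diagonal entries of A(t) nonnegative for every t ∈ (a,b)), and let x : (a,b) → ℝⁿ be differentiable with x'(t) = A(t) x(t) for all t ∈ (a,b). Fix t₀ ∈ (a,b) and τ ∈ (t₀, b], and suppose that all coordinates of x(t₀) are strictly positive and that for every t ∈ [t₀, τ) all coordinates of x(t) are nonnegative. Then, writing ξ(t) := ∏_{i=1}^n x_i(t), one has ξ(t) ≥ ξ(t₀) · exp(∫_{t₀}^{t} trace(A(s)) ds) for every t ∈ [t₀,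 τ). -/
open Matrix

/-- Exponential lower bound for the coordinate product: for a continuous cooperative
linear system `x' = A(t) x` on an open interval `(a, b)` (with `a`, `b` possibly `±∞`,
hence taken in `EReal`), if all coordinates of `x(t₀)` are strictly positive and all
coordinates of `x(t)` are nonnegative for every `t ∈ [t₀, τ)` (where `τ ∈ (t₀, b]`), then
the product `ξ(t) = ∏ i, xᵢ(t)` satisfies
`ξ(t) ≥ ξ(t₀) * exp (∫_{t₀}^{t} trace (A s) ds)` on `[t₀, τ)`. -/
theorem cooperative_product_exp_lower_bound {n : ℕ} (hn : 1 ≤ n) (a b : EReal) (hab : a < b)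
    (A : ℝ → Matrix (Fin n) (Fin n) ℝ)
    (hAcont : ContinuousOn A {t : ℝ | a < (t : EReal) ∧ (t : EReal) < b})
    (hcoop : ∀ t : ℝ, a < (t : EReal) → (t : EReal) < b →
      ∀ i j : Fin n, i ≠ j → 0 ≤ A t i j)
    (x : ℝ → Fin n → ℝ)
    (hx : ∀ t : ℝ, a < (t : EReal) → (t : EReal) < b →
      HasDerivAt x (A t *ᵥ x t) t)
    (t₀ : ℝ) (ht₀a : a < (t₀ : EReal)) (ht₀b : (t₀ : EReal) < b)
    (τ : ℝ) (ht₀τ : t₀ < τ) (hτb : (τ : EReal) ≤ b)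
    (hpos : ∀ i, 0 < x t₀ i)
    (hnn : ∀ t ∈ Set.Ico t₀ τ, ∀ i, 0 ≤ x t i)
    (ξ : ℝ → ℝ) (hξ : ξ = fun t => ∏ i, x t i) :
    ∀ t ∈ Set.Ico t₀ τ,
      ξ t₀ * Real.exp (∫ s in t₀..t, Matrix.trace (A s)) ≤ ξ t := by
  subst hξ
  intro t ht
  obtain ⟨ht₀t, htτ⟩ := ht
  set U : Set ℝ := {s : ℝ | a < (s : EReal) ∧ (s : EReal) < b} with hUdef
  have hUopen : IsOpen U := by
    have : U = Real.toEReal ⁻¹' (Set.Ioi a ∩ Set.Iio b) := rfl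
    rw [this]
    exact (isOpen_Ioi.inter isOpen_Iio).preimage continuous_coe_real_ereal
  -- trace ∘ A is continuous on U
  have htrc : ContinuousOn (fun s => Matrix.trace (A s)) U := by
    have hc : Continuous (fun M : Matrix (Fin n) (Fin n) ℝ => Matrix.trace M) := by
      simp only [Matrix.trace, Matrix.diag]
      exact continuous_finset_sum _ fun i _ =>
        (continuous_apply i).comp (continuous_apply i)
    exact hc.comp_continuousOn hAcont
  -- membership facts
  have hmemU : ∀ s ∈ Set.Icc t₀ t, s ∈ U := by
    intro s hs
    constructor
    · exact lt_of_lt_of_le ht₀a (by exact_mod_cast hs.1)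
    · refine lt_of_lt_of_le ?_ hτb
      exact_mod_cast lt_of_le_of_lt hs.2 htτ
  have hmemIco : ∀ s ∈ Set.Icc t₀ t, s ∈ Set.Ico t₀ τ :=
    fun s hs => ⟨hs.1, lt_of_le_of_lt hs.2 htτ⟩
  set F : ℝ → ℝ := fun u => ∫ s in t₀..u, Matrix.trace (A s) with hFdef
  set g : ℝ → ℝ := fun u => (∏ i, x u i) * Real.exp (-F u) with hgdef
  -- derivative facts at points of Icc t₀ t
  have key : ∀ s ∈ Set.Icc t₀ t, ∃ d : ℝ, 0 ≤ d ∧ HasDerivAt g d s := by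
    intro s hs
    have hsU := hmemU s hs
    have hsa : a < (s : EReal) := hsU.1
    have hsb : (s : EReal) < b := hsU.2
    -- derivative of F at s
    have hint : IntervalIntegrable (fun s => Matrix.trace (A s)) MeasureTheory.volume t₀ s := by
      apply ContinuousOn.intervalIntegrable
      apply htrc.mono
      intro u hu
      rw [Set.uIcc_of_le hs.1] at hu
      exact hmemU u ⟨hu.1, le_trans hu.2 hs.2⟩
    have hF : HasDerivAt F (Matrix.trace (A s)) s :=
      intervalIntegral.integral_hasDerivAt_right hint
        (htrc.stronglyMeasurableAtFilter hUopen s hsU)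
        (htrc.continuousAt (hUopen.mem_nhds hsU))
    -- derivative of exp(-F)
    have hE : HasDerivAt (fun u => Real.exp (-F u))
        (-Matrix.trace (A s) * Real.exp (-F s)) s := by
      have := (Real.hasDerivAt_exp (-F s)).comp s hF.neg
      exact this.congr_deriv (by ring)
    -- derivative of the product
    have hxi : ∀ i : Fin n, HasDerivAt (fun u => x u i) ((A s *ᵥ x s) i) s :=
      hasDerivAt_pi.mp (hx s hsa hsb)
    have hP : HasDerivAt (fun u => ∏ i, x u i)
        (∑ i, (∏ j ∈ Finset.univ.erase i, x s j) • (A s *ᵥ x s) i) s :=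
      HasDerivAt.fun_finsetProd (fun i _ => hxi i)
    set ξ' : ℝ := ∑ i, (∏ j ∈ Finset.univ.erase i, x s j) • (A s *ᵥ x s) i with hξ'def
    have hg : HasDerivAt g ((ξ' - Matrix.trace (A s) * ∏ i, x s i) * Real.exp (-F s)) s := by
      have := hP.mul hE
      exact this.congr_deriv (by ring)
    refine ⟨_, ?_, hg⟩
    have hxnn : ∀ i, 0 ≤ x s i := hnn s (hmemIco s hs)
    have hstep : Matrix.trace (A s) * ∏ i, x s i ≤ ξ' := by
      have htr : Matrix.trace (A s) * ∏ i, x s i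
          = ∑ i, (∏ j ∈ Finset.univ.erase i, x s j) * (A s i i * x s i) := by
        simp only [Matrix.trace, Matrix.diag, Finset.sum_mul]
        refine Finset.sum_congr rfl fun i _ => ?_
        rw [← Finset.mul_prod_erase Finset.univ (fun j => x s j) (Finset.mem_univ i)]
        ring
      rw [htr, hξ'def]
      refine Finset.sum_le_sum fun i _ => ?_
      have hPnn : 0 ≤ ∏ j ∈ Finset.univ.erase i, x s j :=
        Finset.prod_nonneg fun j _ => hxnn j
      have hmv : A s i i * x s i ≤ (A s *ᵥ x s) i := by
        have : (A s *ᵥ x s) i = ∑ k, A s i k * x s k := by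
          simp [Matrix.mulVec, dotProduct]
        rw [this, ← Finset.sum_erase_add Finset.univ (fun k => A s i k * x s k)
          (Finset.mem_univ i)]
        have : 0 ≤ ∑ k ∈ Finset.univ.erase i, A s i k * x s k :=
          Finset.sum_nonneg fun k hk =>
            mul_nonneg (hcoop s hsa hsb i k (Finset.ne_of_mem_erase hk).symm) (hxnn k)
        linarith
      simpa [smul_eq_mul] using mul_le_mul_of_nonneg_left hmv hPnn
    have : 0 ≤ ξ' - Matrix.trace (A s) * ∏ i, x s i := by linarith
    exact mul_nonneg this (Real.exp_pos _).le
  -- monotonicity of g on Icc t₀ t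
  have hmono : MonotoneOn g (Set.Icc t₀ t) := by
    apply monotoneOn_of_deriv_nonneg (convex_Icc t₀ t)
    · intro s hs
      obtain ⟨d, _, hd⟩ := key s hs
      exact hd.continuousAt.continuousWithinAt
    · intro s hs
      have hs' := interior_subset hs
      obtain ⟨d, _, hd⟩ := key s hs'
      exact hd.differentiableAt.differentiableWithinAt
    · intro s hs
      have hs' := interior_subset hs
      obtain ⟨d, hdnn, hd⟩ := key s hs'
      rw [hd.deriv]
      exact hdnn
  have hgt : g t₀ ≤ g t :=
    hmono (Set.left_mem_Icc.mpr ht₀t) (Set.right_mem_Icc.mpr ht₀t) ht₀t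
  have hFt₀ : F t₀ = 0 := intervalIntegral.integral_same
  have hgt₀ : g t₀ = ∏ i, x t₀ i := by
    simp [hgdef, hFt₀]
  rw [hgt₀] at hgt
  have hE := Real.exp_pos (F t)
  calc (∏ i, x t₀ i) * Real.exp (F t)
      ≤ ((∏ i, x t i) * Real.exp (-F t)) * Real.exp (F t) :=
        mul_le_mul_of_nonneg_right hgt hE.le
    _ = ∏ i, x t i := by
        rw [mul_assoc, ← Real.exp_add]
        simp
end

section
/- Strong monotonicity for strongly cooperative systems: Let n ≥ 1, let a < b be real numbers (possibly ±∞), and let A : (a,b) → ℝ^{n×n} be a continuous matrix-valued function that is strongly cooperative, i.e. for every t ∈ (a,b) and all indices i ≠ j, the off-diagonal entry A(t)_{ij} is strictly positive. Let x : (a,b) → ℝⁿ be differentiable with x'(t) = A(t) x(t) for all t ∈ (a,b). If t₀ ∈ (a,b), every coordinate of x(t₀) is nonnegative, and x(t₀) ≠ 0, then for every t ∈ (t₀, b) every coordinate of x(t) is strictly positive. -/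
open Matrix Set Filter Topology

/-- If `f` has derivative `d` at `τ`, vanishes at `τ`, and is nonnegative just to the
left of `τ`, then `d ≤ 0`. -/
lemma aux_deriv_nonpos_of_min_right {f : ℝ → ℝ} {d t₀ τ : ℝ} (h : t₀ < τ)
    (hf : HasDerivAt f d τ) (h0 : f τ = 0)
    (hpos : ∀ s ∈ Set.Ico t₀ τ, 0 ≤ f s) : d ≤ 0 := by
  have hs := hasDerivAt_iff_tendsto_slope.mp hf
  have hmono : 𝓝[Set.Ioo t₀ τ] τ ≤ 𝓝[≠] τ :=
    nhdsWithin_mono τ (fun s hs => ne_of_lt hs.2)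
  have ht : Tendsto (slope f τ) (𝓝[Set.Ioo t₀ τ] τ) (𝓝 d) := hs.mono_left hmono
  have : NeBot (𝓝[Set.Ioo t₀ τ] τ) := right_nhdsWithin_Ioo_neBot h
  refine le_of_tendsto ht ?_
  filter_upwards [self_mem_nhdsWithin] with s hs'
  have hnum : 0 ≤ f s := hpos s ⟨hs'.1.le, hs'.2⟩
  have hden : s - τ ≤ 0 := by linarith [hs'.2]
  have : slope f τ s = (f s - f τ) / (s - τ) := slope_def_field f τ s
  rw [this, h0, sub_zero]
  exact div_nonpos_of_nonneg_of_nonpos hnum hden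

/-- A uniform bound on the row sums of absolute values of a continuous matrix family. -/
lemma aux_bound {n : ℕ} (A : ℝ → Matrix (Fin n) (Fin n) ℝ) (t₀ t₁ : ℝ)
    (hAcont : ContinuousOn A (Set.Icc t₀ t₁)) :
    ∃ C : ℝ, ∀ t ∈ Set.Icc t₀ t₁, ∀ i : Fin n, ∑ k : Fin n, |A t i k| ≤ C := by
  have hgcont : ContinuousOn (fun t => ∑ i : Fin n, ∑ k : Fin n, |A t i k|)
      (Set.Icc t₀ t₁) := by
    refine continuousOn_finset_sum Finset.univ (fun i _ => ?_)
    refine continuousOn_finset_sum Finset.univ (fun k _ => ?_)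
    exact (((continuous_apply k).comp (continuous_apply i)).comp_continuousOn hAcont).abs
  obtain ⟨C, hC⟩ := (isCompact_Icc (a := t₀) (b := t₁)).exists_bound_of_continuousOn hgcont
  refine ⟨C, fun t ht i => ?_⟩
  have h1 : ∑ k : Fin n, |A t i k| ≤ ∑ i' : Fin n, ∑ k : Fin n, |A t i' k| := by
    refine Finset.single_le_sum (f := fun i' => ∑ k : Fin n, |A t i' k|) ?_ (Finset.mem_univ i)
    intro i' _
    exact Finset.sum_nonneg fun k _ => abs_nonneg _
  have h2 := hC t ht
  rw [Real.norm_eq_abs] at h2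
  have h3 : (∑ i' : Fin n, ∑ k : Fin n, |A t i' k|) ≤ C := (le_abs_self _).trans h2
  linarith

/-- Forward invariance of the nonnegative orthant on a compact interval. -/
lemma aux_coop_nonneg {n : ℕ} (A : ℝ → Matrix (Fin n) (Fin n) ℝ) (x : ℝ → Fin n → ℝ)
    (t₀ t₁ : ℝ)
    (hAcont : ContinuousOn A (Set.Icc t₀ t₁))
    (hcoop : ∀ t ∈ Set.Icc t₀ t₁, ∀ i j : Fin n, i ≠ j → 0 < A t i j)
    (hx : ∀ t ∈ Set.Icc t₀ t₁, HasDerivAt x (A t *ᵥ x t) t)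
    (hnn : ∀ i, 0 ≤ x t₀ i) :
    ∀ s ∈ Set.Icc t₀ t₁, ∀ i, 0 ≤ x s i := by
  obtain ⟨C, hCsum⟩ := aux_bound A t₀ t₁ hAcont
  set L : ℝ := C + 1 with hLdef
  have hxc : ContinuousOn x (Set.Icc t₀ t₁) :=
    fun s hs => (hx s hs).continuousAt.continuousWithinAt
  have key : ∀ ε : ℝ, 0 < ε → ∀ s ∈ Set.Icc t₀ t₁, ∀ i,
      0 < x s i + ε * Real.exp (L * (s - t₀)) := by
    intro ε hε
    set z : Fin n → ℝ → ℝ := fun k s => x s k + ε * Real.exp (L * (s - t₀)) with hz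
    show ∀ s ∈ Set.Icc t₀ t₁, ∀ i, 0 < z i s
    by_contra hcon
    push_neg at hcon
    obtain ⟨s₀, hs₀, i₀, hi₀⟩ := hcon
    have hzc : ∀ k, ContinuousOn (z k) (Set.Icc t₀ t₁) := by
      intro k
      exact ((continuous_apply k).comp_continuousOn hxc).add
        (continuous_const.mul (Real.continuous_exp.comp
          (continuous_const.mul (continuous_id.sub continuous_const)))).continuousOn
    set E : Set ℝ := ⋃ k : Fin n, (Set.Icc t₀ t₁ ∩ z k ⁻¹' Set.Iic 0) with hE
    have hEclosed : IsClosed E := by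
      apply isClosed_iUnion_of_finite
      intro k
      exact (hzc k).preimage_isClosed_of_isClosed isClosed_Icc isClosed_Iic
    have hEne : E.Nonempty := ⟨s₀, Set.mem_iUnion.mpr ⟨i₀, hs₀, hi₀⟩⟩
    have hEsub : E ⊆ Set.Icc t₀ t₁ := by
      intro s hs
      rcases Set.mem_iUnion.mp hs with ⟨k, hk, _⟩
      exact hk
    have hEbdd : BddBelow E := (bddBelow_Icc : BddBelow (Set.Icc t₀ t₁)).mono hEsub
    set τ : ℝ := sInf E with hτdef
    have hτE : τ ∈ E := hEclosed.csInf_mem hEne hEbdd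
    have hτIcc : τ ∈ Set.Icc t₀ t₁ := hEsub hτE
    obtain ⟨i, _, hile⟩ : ∃ k, τ ∈ Set.Icc t₀ t₁ ∧ z k τ ≤ 0 := by
      rcases Set.mem_iUnion.mp hτE with ⟨k, hk1, hk2⟩
      exact ⟨k, hk1, hk2⟩
    have hzt₀ : ∀ k, 0 < z k t₀ := by
      intro k
      have : z k t₀ = x t₀ k + ε := by simp [hz]
      rw [this]
      have := hnn k
      linarith
    have ht₀τ : t₀ < τ := by
      rcases lt_or_eq_of_le hτIcc.1 with h | h
      · exact h
      · exfalso
        have := hzt₀ i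
        rw [h] at this
        linarith
    have hbefore : ∀ s ∈ Set.Ico t₀ τ, ∀ k, 0 < z k s := by
      intro s hs k
      by_contra hc
      push_neg at hc
      have hsE : s ∈ E := Set.mem_iUnion.mpr ⟨k, ⟨hs.1, hs.2.le.trans hτIcc.2⟩, hc⟩
      exact absurd (csInf_le hEbdd hsE) (not_le.mpr hs.2)
    have hz0 : ∀ k, 0 ≤ z k τ := by
      intro k
      have hcw : ContinuousWithinAt (z k) (Set.Icc t₀ t₁) τ := (hzc k) τ hτIcc
      have hsub : Set.Ioo t₀ τ ⊆ Set.Icc t₀ t₁ :=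
        fun s hs => ⟨hs.1.le, hs.2.le.trans hτIcc.2⟩
      have htd : Tendsto (z k) (𝓝[Set.Ioo t₀ τ] τ) (𝓝 (z k τ)) := hcw.mono hsub
      have : NeBot (𝓝[Set.Ioo t₀ τ] τ) := right_nhdsWithin_Ioo_neBot ht₀τ
      refine ge_of_tendsto htd ?_
      filter_upwards [self_mem_nhdsWithin] with s hs
      exact (hbefore s ⟨hs.1.le, hs.2⟩ k).le
    have hzτ : z i τ = 0 := le_antisymm hile (hz0 i)
    set e : ℝ := Real.exp (L * (τ - t₀)) with hedef
    have he : 0 < e := Real.exp_pos _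
    -- derivative of z i at τ
    have hde : HasDerivAt (fun s => ε * Real.exp (L * (s - t₀))) (ε * (e * L)) τ := by
      have h1 : HasDerivAt (fun s : ℝ => L * (s - t₀)) (L * 1) τ :=
        ((hasDerivAt_id τ).sub_const t₀).const_mul L
      have h2 := h1.exp
      have h3 := h2.const_mul ε
      simpa [hedef, mul_one] using h3
    have hdz : HasDerivAt (z i) ((A τ *ᵥ x τ) i + ε * (e * L)) τ :=
      ((hasDerivAt_pi.1 (hx τ hτIcc)) i).add hde
    have hd_nonpos : (A τ *ᵥ x τ) i + ε * (e * L) ≤ 0 :=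
      aux_deriv_nonpos_of_min_right ht₀τ hdz hzτ (fun s hs => (hbefore s hs i).le)
    -- lower bound on the derivative
    have hxτi : x τ i = -(ε * e) := by
      have : x τ i + ε * e = 0 := hzτ
      linarith
    have hxk : ∀ k, -(ε * e) ≤ x τ k := by
      intro k
      have : 0 ≤ x τ k + ε * e := hz0 k
      linarith
    have hεe : 0 ≤ ε * e := by positivity
    have hterm : ∀ k : Fin n, -(ε * e * |A τ i k|) ≤ A τ i k * x τ k := by
      intro k
      by_cases hk : k = i
      · subst hk
        rw [hxτi]
        have h1 : ε * e * A τ k k ≤ ε * e * |A τ k k| :=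
          mul_le_mul_of_nonneg_left (le_abs_self _) hεe
        nlinarith
      · have hA : 0 < A τ i k := hcoop τ hτIcc i k (fun h => hk h.symm)
        have h1 : A τ i k * (-(ε * e)) ≤ A τ i k * x τ k :=
          mul_le_mul_of_nonneg_left (hxk k) hA.le
        have h2 : ε * e * A τ i k ≤ ε * e * |A τ i k| :=
          mul_le_mul_of_nonneg_left (le_abs_self _) hεe
        nlinarith
    have hmv : (A τ *ᵥ x τ) i = ∑ k : Fin n, A τ i k * x τ k := by
      simp [Matrix.mulVec, dotProduct]
    have hsum : -(ε * e * C) ≤ (A τ *ᵥ x τ) i := by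
      rw [hmv]
      have h1 : ∑ k : Fin n, -(ε * e * |A τ i k|) ≤ ∑ k : Fin n, A τ i k * x τ k :=
        Finset.sum_le_sum fun k _ => hterm k
      have h2 : ∑ k : Fin n, -(ε * e * |A τ i k|) = -(ε * e * ∑ k : Fin n, |A τ i k|) := by
        rw [Finset.mul_sum, Finset.sum_neg_distrib]
      have h3 : ε * e * ∑ k : Fin n, |A τ i k| ≤ ε * e * C :=
        mul_le_mul_of_nonneg_left (hCsum τ hτIcc i) hεe
      linarith [h1, h2 ▸ h1]
    have harith : ε * (e * L) = ε * e * C + ε * e := by rw [hLdef]; ring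
    have hεe' : 0 < ε * e := mul_pos hε he
    linarith
  -- conclude nonnegativity from the family of strict inequalities
  intro s hs i
  by_contra hneg
  push_neg at hneg
  set M : ℝ := Real.exp (L * (s - t₀)) with hMdef
  have hM : 0 < M := Real.exp_pos _
  have hεpos : 0 < -x s i / M := div_pos (neg_pos.2 hneg) hM
  have := key (-x s i / M) hεpos s hs i
  rw [← hMdef] at this
  have : 0 < x s i + -x s i := by
    have hcancel : -x s i / M * M = -x s i := div_mul_cancel₀ _ (ne_of_gt hM)
    linarith [this, hcancel ▸ this]
  linarith

/-- Strict positivity at the right endpoint. -/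
lemma aux_coop_pos {n : ℕ} (A : ℝ → Matrix (Fin n) (Fin n) ℝ) (x : ℝ → Fin n → ℝ)
    (t₀ t₁ : ℝ) (ht : t₀ < t₁)
    (hAcont : ContinuousOn A (Set.Icc t₀ t₁))
    (hcoop : ∀ t ∈ Set.Icc t₀ t₁, ∀ i j : Fin n, i ≠ j → 0 < A t i j)
    (hx : ∀ t ∈ Set.Icc t₀ t₁, HasDerivAt x (A t *ᵥ x t) t)
    (hnn : ∀ i, 0 ≤ x t₀ i) (hne : x t₀ ≠ 0) :
    ∀ i, 0 < x t₁ i := by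
  have hxnn := aux_coop_nonneg A x t₀ t₁ hAcont hcoop hx hnn
  obtain ⟨C, hCsum⟩ := aux_bound A t₀ t₁ hAcont
  have hCdiag : ∀ t ∈ Set.Icc t₀ t₁, ∀ i : Fin n, -C ≤ A t i i := by
    intro t htm i
    have h1 : |A t i i| ≤ ∑ k : Fin n, |A t i k| :=
      Finset.single_le_sum (f := fun k => |A t i k|) (fun k _ => abs_nonneg _)
        (Finset.mem_univ i)
    have := (h1.trans (hCsum t htm i))
    have := abs_le.mp this
    linarith [this.1]
  have hxc : ContinuousOn x (Set.Icc t₀ t₁) :=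
    fun s hs => (hx s hs).continuousAt.continuousWithinAt
  obtain ⟨j, hj⟩ : ∃ j, 0 < x t₀ j := by
    by_contra h
    push_neg at h
    exact hne (funext fun k => le_antisymm (h k) (hnn k))
  -- derivative of the rescaled coordinates
  have hvderiv : ∀ i : Fin n, ∀ s ∈ Set.Icc t₀ t₁,
      HasDerivAt (fun u => Real.exp (C * u) * x u i)
        (Real.exp (C * s) * C * x s i + Real.exp (C * s) * (A s *ᵥ x s) i) s := by
    intro i s hs
    have h1 : HasDerivAt (fun u : ℝ => Real.exp (C * u)) (Real.exp (C * s) * C) s := by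
      simpa [mul_one] using (((hasDerivAt_id s).const_mul C).exp)
    exact h1.mul ((hasDerivAt_pi.1 (hx s hs)) i)
  have hvcont : ∀ i : Fin n, ContinuousOn (fun u => Real.exp (C * u) * x u i)
      (Set.Icc t₀ t₁) := by
    intro i
    exact (Real.continuous_exp.comp (continuous_const.mul continuous_id)).continuousOn.mul
      ((continuous_apply i).comp_continuousOn hxc)
  have hmv : ∀ s, ∀ i : Fin n, (A s *ᵥ x s) i = ∑ k : Fin n, A s i k * x s k := by
    intro s i
    simp [Matrix.mulVec, dotProduct]
  -- Step A: coordinate j is positive on all of [t₀, t₁]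
  have hstepA : ∀ s ∈ Set.Icc t₀ t₁, 0 < x s j := by
    have hwmono : MonotoneOn (fun u => Real.exp (C * u) * x u j) (Set.Icc t₀ t₁) := by
      apply monotoneOn_of_deriv_nonneg (convex_Icc t₀ t₁) (hvcont j)
      · intro s hs
        rw [interior_Icc] at hs
        exact ((hvderiv j s (Ioo_subset_Icc_self hs)).differentiableAt).differentiableWithinAt
      · intro s hs
        rw [interior_Icc] at hs
        have hsIcc : s ∈ Set.Icc t₀ t₁ := Ioo_subset_Icc_self hs
        rw [(hvderiv j s hsIcc).deriv]
        have hinner : 0 ≤ C * x s j + (A s *ᵥ x s) j := by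
          rw [hmv s j]
          have hsplit : A s j j * x s j + ∑ k ∈ Finset.univ.erase j, A s j k * x s k
              = ∑ k : Fin n, A s j k * x s k :=
            Finset.add_sum_erase Finset.univ (fun k => A s j k * x s k) (Finset.mem_univ j)
          have herase : 0 ≤ ∑ k ∈ Finset.univ.erase j, A s j k * x s k := by
            apply Finset.sum_nonneg
            intro k hk
            have hkj : k ≠ j := (Finset.mem_erase.mp hk).1
            exact mul_nonneg (hcoop s hsIcc j k (fun hh => hkj hh.symm)).le
              (hxnn s hsIcc k)
          have hdiag : 0 ≤ (C + A s j j) * x s j :=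
            mul_nonneg (by linarith [hCdiag s hsIcc j]) (hxnn s hsIcc j)
          nlinarith [hsplit, herase, hdiag]
        have hexp : 0 ≤ Real.exp (C * s) := (Real.exp_pos _).le
        nlinarith [mul_nonneg hexp hinner]
    intro s hs
    have h1 : Real.exp (C * t₀) * x t₀ j ≤ Real.exp (C * s) * x s j :=
      hwmono (Set.left_mem_Icc.mpr ht.le) hs hs.1
    have h2 : 0 < Real.exp (C * t₀) * x t₀ j := mul_pos (Real.exp_pos _) hj
    nlinarith [Real.exp_pos (C * s)]
  -- Step B: every coordinate is positive at t₁
  intro i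
  by_cases hij : i = j
  · subst hij
    exact hstepA t₁ (Set.right_mem_Icc.mpr ht.le)
  · have hvmono : StrictMonoOn (fun u => Real.exp (C * u) * x u i) (Set.Icc t₀ t₁) := by
      apply strictMonoOn_of_deriv_pos (convex_Icc t₀ t₁) (hvcont i)
      intro s hs
      rw [interior_Icc] at hs
      have hsIcc : s ∈ Set.Icc t₀ t₁ := Ioo_subset_Icc_self hs
      rw [(hvderiv i s hsIcc).deriv]
      have hinner : 0 < C * x s i + (A s *ᵥ x s) i := by
        rw [hmv s i]
        have hsplit : A s i i * x s i + ∑ k ∈ Finset.univ.erase i, A s i k * x s k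
            = ∑ k : Fin n, A s i k * x s k :=
          Finset.add_sum_erase Finset.univ (fun k => A s i k * x s k) (Finset.mem_univ i)
        have herase : A s i j * x s j ≤ ∑ k ∈ Finset.univ.erase i, A s i k * x s k := by
          apply Finset.single_le_sum (f := fun k => A s i k * x s k)
          · intro k hk
            have hki : k ≠ i := (Finset.mem_erase.mp hk).1
            exact mul_nonneg (hcoop s hsIcc i k (fun hh => hki hh.symm)).le
              (hxnn s hsIcc k)
          · exact Finset.mem_erase.mpr ⟨fun hh => hij hh.symm, Finset.mem_univ j⟩
        have hpos : 0 < A s i j * x s j :=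
          mul_pos (hcoop s hsIcc i j hij) (hstepA s hsIcc)
        have hdiag : 0 ≤ (C + A s i i) * x s i :=
          mul_nonneg (by linarith [hCdiag s hsIcc i]) (hxnn s hsIcc i)
        nlinarith [hsplit, herase, hpos, hdiag]
      have hexp : 0 < Real.exp (C * s) := Real.exp_pos _
      nlinarith [mul_pos hexp hinner]
    have h1 : Real.exp (C * t₀) * x t₀ i < Real.exp (C * t₁) * x t₁ i :=
      hvmono (Set.left_mem_Icc.mpr ht.le) (Set.right_mem_Icc.mpr ht.le) ht
    have h2 : 0 ≤ Real.exp (C * t₀) * x t₀ i := mul_nonneg (Real.exp_pos _).le (hnn i)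
    nlinarith [Real.exp_pos (C * t₁)]

/-- Strong monotonicity for strongly cooperative systems: for a continuous strongly
cooperative linear system `x' = A(t) x` (all off-diagonal entries of `A(t)` strictly
positive) on an open interval `(a, b)` (with `a`, `b` possibly `±∞`, hence taken in
`EReal`), if `x(t₀)` is nonnegative in every coordinate and nonzero, then all coordinates
of `x(t)` are strictly positive for every later `t` in the interval. -/
theorem strongly_cooperative_strong_monotonicity {n : ℕ} (hn : 1 ≤ n)
    (a b : EReal) (hab : a < b)
    (A : ℝ → Matrix (Fin n) (Fin n) ℝ)
    (hAcont : ContinuousOn A {t : ℝ | a < (t : EReal) ∧ (t : EReal) < b})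
    (hcoop : ∀ t : ℝ, a < (t : EReal) → (t : EReal) < b →
      ∀ i j : Fin n, i ≠ j → 0 < A t i j)
    (x : ℝ → Fin n → ℝ)
    (hx : ∀ t : ℝ, a < (t : EReal) → (t : EReal) < b →
      HasDerivAt x (A t *ᵥ x t) t)
    (t₀ : ℝ) (ht₀a : a < (t₀ : EReal)) (ht₀b : (t₀ : EReal) < b)
    (hnn : ∀ i, 0 ≤ x t₀ i) (hne : x t₀ ≠ 0) :
    ∀ t : ℝ, t₀ < t → (t : EReal) < b → ∀ i, 0 < x t i := by
  intro t ht₀t htb i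
  have hsub : ∀ s ∈ Set.Icc t₀ t, a < (s : EReal) ∧ (s : EReal) < b := by
    intro s hs
    constructor
    · exact lt_of_lt_of_le ht₀a (EReal.coe_le_coe_iff.mpr hs.1)
    · exact lt_of_le_of_lt (EReal.coe_le_coe_iff.mpr hs.2) htb
  exact aux_coop_pos A x t₀ t ht₀t
    (hAcont.mono (fun s hs => hsub s hs))
    (fun s hs i j hij => hcoop s (hsub s hs).1 (hsub s hs).2 i j hij)
    (fun s hs => hx s (hsub s hs).1 (hsub s hs).2)
    hnn hne i
end

section
/- Carathéodory version of (M2): Let n ≥ 1, let a < b be real numbers (possibly ±∞), and let A : (a,b) → ℝ^{n×n} be a measurable, locally integrable matrix-valued function such that for almost every t ∈ (a,b) and all indices i ≠ j, the off-diagonal entry A(t)_{ij} is nonnegative. Let x : (a,b) → ℝⁿ be locally absolutely continuous with x'(t) = A(t) x(t) for almost every t ∈ (a,b). If t₀ ∈ (a,b) and every coordinate of x(t₀) is strictly positive, then for every t ∈ (t₀, b) every coordinate of x(t) is strictly positive. -/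
open Matrix MeasureTheory

open Filter


private lemma exp_neg_two_le {r : ℝ} (h0 : 0 ≤ r) (h1 : r ≤ 1/2) :
    Real.exp (-(2*r)) ≤ 1 - r := by
  have hpos : (0:ℝ) < Real.exp (2*r) := Real.exp_pos _
  have key : 1 ≤ (1 - r) * Real.exp (2*r) := by
    nlinarith [Real.add_one_le_exp (2*r)]
  rw [Real.exp_neg, inv_eq_one_div, div_le_iff₀ hpos]
  linarith

private lemma exp_neg_one_le {d : ℝ} (h0 : 0 ≤ d) (h1 : d ≤ 1) :
    Real.exp (-d) ≤ 1 - d/2 := by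
  have hpos : (0:ℝ) < Real.exp d := Real.exp_pos _
  have key : 1 ≤ (1 - d/2) * Real.exp d := by
    nlinarith [Real.add_one_le_exp d]
  rw [Real.exp_neg, inv_eq_one_div, div_le_iff₀ hpos]
  linarith

private lemma le_at_right_endpoint {D : ℝ → ℝ} {p q : ℝ} (hpq : p < q)
    (hD : ContinuousWithinAt D (Set.Ico p q) q)
    (h : ∀ u ∈ Set.Ico p q, 0 ≤ D u) : 0 ≤ D q := by
  have hne : (nhdsWithin q (Set.Ico p q)).NeBot := by
    rw [← mem_closure_iff_nhdsWithin_neBot, closure_Ico hpq.ne]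
    exact Set.right_mem_Icc.mpr hpq.le
  exact ge_of_tendsto hD (eventually_nhdsWithin_of_forall h)

private lemma gron_arith {p m₀ r d fσ fu e1 e2 : ℝ} (hp : 0 < p) (hmσ : m₀ ≤ p)
    (hfσ : p ≤ fσ) (hr0 : 0 ≤ r) (hr2 : r ≤ 1/2) (hrm : r ≤ m₀/4) (hd0 : 0 ≤ d)
    (hd1 : d ≤ 1) (hE1 : e1 ≤ 1 - r) (hE2 : e2 ≤ 1 - d/2) (he1 : 0 < e1) (he2 : 0 < e2)
    (hfu : fσ - (fσ + d) * r ≤ fu) : p * (e1 * e2) ≤ fu := by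
  have step1 : e1 * e2 ≤ (1-r)*(1-d/2) := mul_le_mul hE1 hE2 he2.le (by linarith)
  have step2 : p * (e1 * e2) ≤ p * ((1-r)*(1-d/2)) := mul_le_mul_of_nonneg_left step1 hp.le
  have key1 : m₀ * (1/2) ≤ p * (1-r) := mul_le_mul hmσ (by linarith) (by norm_num) hp.le
  have key2 : m₀ * (1/2) * (d/2) ≤ p * (1-r) * (d/2) :=
    mul_le_mul_of_nonneg_right key1 (by linarith)
  have key3 : r * d ≤ m₀/4 * d := mul_le_mul_of_nonneg_right hrm hd0
  have key4 : 0 ≤ (fσ - p) * (1-r) := mul_nonneg (by linarith) (by linarith)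
  nlinarith [key2, key3, key4]

private lemma gronwall_pos {α τ : ℝ} (hατ : α ≤ τ) {f g K : ℝ → ℝ}
    (hg : IntegrableOn g (Set.Icc α τ))
    (hK : IntegrableOn K (Set.Icc α τ))
    (hK0 : ∀ u, 0 ≤ K u)
    (hf : ∀ s ∈ Set.Icc α τ, f s = f α + ∫ u in α..s, g u)
    (hineq : ∀ᵐ u, u ∈ Set.Icc α τ → -(K u * f u) ≤ g u)
    (hfα : 0 < f α) :
    0 < f τ := by
  -- interval integrability helpers
  have hIg : ∀ p ∈ Set.Icc α τ, ∀ q ∈ Set.Icc α τ, IntervalIntegrable g volume p q :=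
    fun p hp q hq => (hg.mono_set (Set.uIcc_subset_Icc hp hq)).intervalIntegrable
  have habs : IntegrableOn (fun u => |g u|) (Set.Icc α τ) := hg.abs
  have hIga : ∀ p ∈ Set.Icc α τ, ∀ q ∈ Set.Icc α τ,
      IntervalIntegrable (fun u => |g u|) volume p q :=
    fun p hp q hq => (habs.mono_set (Set.uIcc_subset_Icc hp hq)).intervalIntegrable
  have hIK : ∀ p ∈ Set.Icc α τ, ∀ q ∈ Set.Icc α τ, IntervalIntegrable K volume p q :=
    fun p hp q hq => (hK.mono_set (Set.uIcc_subset_Icc hp hq)).intervalIntegrable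
  have hαmem : α ∈ Set.Icc α τ := Set.left_mem_Icc.mpr hατ
  have hτmem : τ ∈ Set.Icc α τ := Set.right_mem_Icc.mpr hατ
  set G : ℝ → ℝ := fun s => ∫ u in α..s, K u with hGdef
  set H : ℝ → ℝ := fun s => ∫ u in α..s, |g u| with hHdef
  set φ : ℝ → ℝ := fun s => f α * Real.exp (-(2 * G s + H s)) with hφdef
  -- continuity
  have hGc : ContinuousOn G (Set.Icc α τ) := by
    have := intervalIntegral.continuousOn_primitive_interval
      (a := α) (b := τ) (μ := volume) (f := K) (by rwa [Set.uIcc_of_le hατ])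
    rwa [Set.uIcc_of_le hατ] at this
  have hHc : ContinuousOn H (Set.Icc α τ) := by
    have := intervalIntegral.continuousOn_primitive_interval
      (a := α) (b := τ) (μ := volume) (f := fun u => |g u|) (by rw [Set.uIcc_of_le hατ]; exact habs)
    rwa [Set.uIcc_of_le hατ] at this
  have hφc : ContinuousOn φ (Set.Icc α τ) := by
    exact continuousOn_const.mul (Real.continuous_exp.comp_continuousOn
      (((continuousOn_const.mul hGc).add hHc).neg))
  have hfc : ContinuousOn f (Set.Icc α τ) := by
    have h1 : ContinuousOn (fun s => f α + ∫ u in α..s, g u) (Set.Icc α τ) := by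
      refine continuousOn_const.add ?_
      have := intervalIntegral.continuousOn_primitive_interval
        (a := α) (b := τ) (μ := volume) (f := g) (by rwa [Set.uIcc_of_le hατ])
      rwa [Set.uIcc_of_le hατ] at this
    exact h1.congr hf
  -- additivity and monotonicity of G, H, f
  have hGadd : ∀ p ∈ Set.Icc α τ, ∀ q ∈ Set.Icc α τ, G q = G p + ∫ u in p..q, K u := by
    intro p hp q hq
    rw [hGdef]
    exact (intervalIntegral.integral_add_adjacent_intervals (hIK α hαmem p hp) (hIK p hp q hq)).symm
  have hHadd : ∀ p ∈ Set.Icc α τ, ∀ q ∈ Set.Icc α τ, H q = H p + ∫ u in p..q, |g u| := by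
    intro p hp q hq
    rw [hHdef]
    exact (intervalIntegral.integral_add_adjacent_intervals
      (hIga α hαmem p hp) (hIga p hp q hq)).symm
  have hfadd : ∀ p ∈ Set.Icc α τ, ∀ q ∈ Set.Icc α τ, f q = f p + ∫ u in p..q, g u := by
    intro p hp q hq
    rw [hf p hp, hf q hq, add_assoc]
    congr 1
    exact (intervalIntegral.integral_add_adjacent_intervals (hIg α hαmem p hp) (hIg p hp q hq)).symm
  have hGmono : ∀ p ∈ Set.Icc α τ, ∀ q ∈ Set.Icc α τ, p ≤ q → G p ≤ G q := by
    intro p hp q hq hpq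
    rw [hGadd p hp q hq]
    have : 0 ≤ ∫ u in p..q, K u := intervalIntegral.integral_nonneg hpq (fun u _ => hK0 u)
    linarith
  have hHmono : ∀ p ∈ Set.Icc α τ, ∀ q ∈ Set.Icc α τ, p ≤ q → H p ≤ H q := by
    intro p hp q hq hpq
    rw [hHadd p hp q hq]
    have : 0 ≤ ∫ u in p..q, |g u| :=
      intervalIntegral.integral_nonneg hpq (fun u _ => abs_nonneg _)
    linarith
  have hφmono : ∀ p ∈ Set.Icc α τ, ∀ q ∈ Set.Icc α τ, p ≤ q → φ q ≤ φ p := by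
    intro p hp q hq hpq
    rw [hφdef]
    have : -(2 * G q + H q) ≤ -(2 * G p + H p) := by
      have h1 := hGmono p hp q hq hpq
      have h2 := hHmono p hp q hq hpq
      linarith
    exact mul_le_mul_of_nonneg_left (Real.exp_le_exp.mpr this) hfα.le
  have hφα : φ α = f α := by
    rw [hφdef]
    simp [hGdef, hHdef, intervalIntegral.integral_same]
  have hφpos : ∀ s, 0 < φ s := fun s => mul_pos hfα (Real.exp_pos _)
  set m₀ : ℝ := φ τ with hm₀def
  have hm₀ : 0 < m₀ := hφpos τ
  -- the set where the lower bound holds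
  set E : Set ℝ := {s ∈ Set.Icc α τ | ∀ u ∈ Set.Icc α s, φ u ≤ f u} with hEdef
  have hαE : α ∈ E := by
    refine ⟨hαmem, fun u hu => ?_⟩
    have : u = α := le_antisymm hu.2 hu.1
    rw [this, hφα]
  have hEne : E.Nonempty := ⟨α, hαE⟩
  have hEbdd : BddAbove E := ⟨τ, fun s hs => hs.1.2⟩
  set σ : ℝ := sSup E with hσdef
  have hσIcc : σ ∈ Set.Icc α τ :=
    ⟨le_csSup hEbdd hαE, csSup_le hEne (fun s hs => hs.1.2)⟩
  have hσE : σ ∈ E := by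
    refine ⟨hσIcc, fun u hu => ?_⟩
    rcases lt_or_eq_of_le hu.2 with hlt | heq
    · obtain ⟨s, hsE, hus⟩ := exists_lt_of_lt_csSup hEne hlt
      exact hsE.2 u ⟨hu.1, hus.le⟩
    · rw [heq]
      have huα : α ≤ σ := heq ▸ hu.1
      rcases eq_or_lt_of_le huα with hα | hα
      · rw [← hα, hφα]
      · have hsub : Set.Ico α σ ⊆ Set.Icc α τ := fun v hv =>
          ⟨hv.1, hv.2.le.trans hσIcc.2⟩
        have hD : ContinuousWithinAt (fun v => f v - φ v) (Set.Ico α σ) σ :=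
          ((hfc.sub hφc) σ hσIcc).mono hsub
        have h0 : ∀ v ∈ Set.Ico α σ, 0 ≤ f v - φ v := by
          intro v hv
          obtain ⟨s, hsE, hvs⟩ := exists_lt_of_lt_csSup hEne hv.2
          have := hsE.2 v ⟨hv.1, hvs.le⟩
          linarith
        have := le_at_right_endpoint hα hD h0
        linarith
  -- σ = τ
  have hστ : σ = τ := by
    by_contra hne
    have hlt : σ < τ := lt_of_le_of_ne hσIcc.2 hne
    have hfσ : φ σ ≤ f σ := hσE.2 σ ⟨hσIcc.1, le_refl σ⟩
    have hmσ : m₀ ≤ φ σ := hφmono σ hσIcc τ hτmem hσIcc.2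
    set ε : ℝ := min (1/2) (m₀/4) with hεdef
    have hε : 0 < ε := lt_min (by norm_num) (by linarith)
    -- find η
    have hGσ : ContinuousWithinAt G (Set.Icc α τ) σ := hGc σ hσIcc
    have hHσ : ContinuousWithinAt H (Set.Icc α τ) σ := hHc σ hσIcc
    have hev : ∀ᶠ u in nhdsWithin σ (Set.Icc α τ), G u - G σ < ε ∧ H u - H σ < 1 := by
      have h1 : ∀ᶠ u in nhdsWithin σ (Set.Icc α τ), G u < G σ + ε :=
        hGσ.eventually_lt_const (by linarith)
      have h2 : ∀ᶠ u in nhdsWithin σ (Set.Icc α τ), H u < H σ + 1 :=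
        hHσ.eventually_lt_const (by linarith)
      filter_upwards [h1, h2] with u hu1 hu2
      exact ⟨by linarith, by linarith⟩
    obtain ⟨δ, hδ, hball⟩ := Metric.mem_nhdsWithin_iff.mp hev
    set η : ℝ := min (δ/2) (τ - σ) with hηdef
    have hη : 0 < η := lt_min (by linarith) (by linarith)
    have hησ : σ + η ≤ τ := by
      have : η ≤ τ - σ := min_le_right _ _
      linarith
    have hmemIcc : ∀ u ∈ Set.Icc σ (σ + η), u ∈ Set.Icc α τ := by
      intro u hu
      exact ⟨hσIcc.1.trans hu.1, hu.2.trans hησ⟩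
    have hGH : ∀ u ∈ Set.Icc σ (σ + η), G u - G σ < ε ∧ H u - H σ < 1 := by
      intro u hu
      apply hball
      constructor
      · rw [Metric.mem_ball, Real.dist_eq, abs_sub_lt_iff]
        constructor
        · have : η ≤ δ/2 := min_le_left _ _
          have := hu.2; have := hu.1
          linarith
        · have := hu.1; linarith
      · exact hmemIcc u hu
    -- key estimate: σ + η ∈ E
    have hkey : σ + η ∈ E := by
      refine ⟨⟨hσIcc.1.trans (by linarith), hησ⟩, fun u hu => ?_⟩
      rcases le_or_gt u σ with hcase | hcase
      · exact hσE.2 u ⟨hu.1, hcase⟩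
      · -- σ < u ≤ σ + η
        have huIcc : u ∈ Set.Icc σ (σ + η) := ⟨hcase.le, hu.2⟩
        have huτ : u ∈ Set.Icc α τ := hmemIcc u huIcc
        set r : ℝ := G u - G σ with hrdef
        set d : ℝ := H u - H σ with hddef
        have hrint : r = ∫ v in σ..u, K v := by
          rw [hrdef, hGadd σ hσIcc u huτ]; ring
        have hdint : d = ∫ v in σ..u, |g v| := by
          rw [hddef, hHadd σ hσIcc u huτ]; ring
        have hr0 : 0 ≤ r := by
          rw [hrint]; exact intervalIntegral.integral_nonneg hcase.le (fun v _ => hK0 v)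
        have hd0 : 0 ≤ d := by
          rw [hdint]; exact intervalIntegral.integral_nonneg hcase.le (fun v _ => abs_nonneg _)
        have hrε : r < ε := (hGH u huIcc).1
        have hd1 : d ≤ 1 := (hGH u huIcc).2.le
        have hr2 : r ≤ 1/2 := le_trans hrε.le (min_le_left _ _)
        have hrm : r ≤ m₀/4 := le_trans hrε.le (min_le_right _ _)
        -- sup bound on [σ, u]
        have hsup : ∀ v ∈ Set.Icc σ u, f v ≤ f σ + d := by
          intro v hv
          have hvτ : v ∈ Set.Icc α τ := ⟨hσIcc.1.trans hv.1, hv.2.trans huτ.2⟩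
          rw [hfadd σ hσIcc v hvτ]
          have h1 : (∫ w in σ..v, g w) ≤ ∫ w in σ..v, |g w| :=
            intervalIntegral.integral_mono_on hv.1 (hIg σ hσIcc v hvτ)
              (hIga σ hσIcc v hvτ) (fun w _ => le_abs_self _)
          have h2 : (∫ w in σ..v, |g w|) ≤ ∫ w in σ..u, |g w| := by
            have hadd := intervalIntegral.integral_add_adjacent_intervals
              (hIga σ hσIcc v hvτ) (hIga v hvτ u huτ)
            have h3 : 0 ≤ ∫ w in v..u, |g w| :=
              intervalIntegral.integral_nonneg hv.2 (fun w _ => abs_nonneg _)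
            linarith
          rw [← hdint] at h2
          linarith
        -- lower bound on the integral of g
        have hlow : -((f σ + d) * r) ≤ ∫ v in σ..u, g v := by
          have hconst : (∫ v in σ..u, -(f σ + d) * K v) = -(f σ + d) * r := by
            rw [intervalIntegral.integral_const_mul, hrint]
          have hmono : (∫ v in σ..u, -(f σ + d) * K v) ≤ ∫ v in σ..u, g v := by
            apply intervalIntegral.integral_mono_ae_restrict hcase.le
              ((hIK σ hσIcc u huτ).const_mul _) (hIg σ hσIcc u huτ)
            have hae := ae_restrict_of_ae (μ := volume) (s := Set.Icc σ u) hineq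
            have hmem := ae_restrict_mem (μ := volume) (measurableSet_Icc (a := σ) (b := u))
            filter_upwards [hae, hmem] with v hv1 hv2
            have hvτ : v ∈ Set.Icc α τ := ⟨hσIcc.1.trans hv2.1, hv2.2.trans huτ.2⟩
            have h1 := hv1 hvτ
            have h2 : K v * f v ≤ K v * (f σ + d) :=
              mul_le_mul_of_nonneg_left (hsup v hv2) (hK0 v)
            have : -(K v * (f σ + d)) ≤ -(K v * f v) := by linarith
            calc -(f σ + d) * K v = -(K v * (f σ + d)) := by ring
              _ ≤ -(K v * f v) := this
              _ ≤ g v := h1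
          linarith [hconst ▸ hmono]
        have hfu : f σ - (f σ + d) * r ≤ f u := by
          rw [hfadd σ hσIcc u huτ]
          linarith
        -- final arithmetic
        have hφu : φ u = φ σ * Real.exp (-(2*r + d)) := by
          rw [hφdef]
          simp only []
          rw [mul_assoc, ← Real.exp_add]
          congr 2
          rw [hrdef, hddef]; ring
        have hE1 : Real.exp (-(2*r)) ≤ 1 - r := exp_neg_two_le hr0 hr2
        have hE2 : Real.exp (-d) ≤ 1 - d/2 := exp_neg_one_le hd0 hd1
        have hsplit : Real.exp (-(2*r + d)) = Real.exp (-(2*r)) * Real.exp (-d) := by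
          rw [← Real.exp_add]; ring_nf
        have he1pos : 0 < Real.exp (-(2*r)) := Real.exp_pos _
        have he2pos : 0 < Real.exp (-d) := Real.exp_pos _
        have hφσpos : 0 < φ σ := hφpos σ
        rw [hφu, hsplit]
        exact gron_arith hφσpos hmσ hfσ hr0 hr2 hrm hd0 hd1 hE1 hE2 he1pos he2pos hfu
    have : σ + η ≤ σ := le_csSup hEbdd hkey
    linarith
  have hfin : φ τ ≤ f τ := hσE.2 τ (by rw [hστ]; exact hτmem)
  exact lt_of_lt_of_le (hφpos τ) hfin



/-- Carathéodory version of (M2): let `A` be a measurable matrix-valued function on the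
open interval `(a, b)` (with `a`, `b` possibly `±∞`, hence taken in `EReal`) whose entries
are integrable on every compact subinterval of `(a, b)`, and whose off-diagonal entries
are nonnegative for almost every `t ∈ (a, b)`.  A locally absolutely continuous function
`x` satisfying `x' = A(t) x` almost everywhere is encoded, equivalently, as a continuous
function satisfying the integral identity `x(t₂) = x(t₁) + ∫_{t₁}^{t₂} A(s) x(s) ds` for
all `t₁, t₂` in the interval (this is the standard characterization of Carathéodory
solutions, since Mathlib has no predicate for absolutely continuous functions).  If all
coordinates of `x(t₀)` are strictly positive, then all coordinates of `x(t)` are strictly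
positive for every later `t` in the interval. -/
theorem caratheodory_cooperative_M2 {n : ℕ} (hn : 1 ≤ n) (a b : EReal) (hab : a < b)
    (A : ℝ → Matrix (Fin n) (Fin n) ℝ)
    (hAmeas : ∀ i j : Fin n, Measurable fun t => A t i j)
    (hAint : ∀ c d : ℝ, a < (c : EReal) → (d : EReal) < b → c ≤ d →
      ∀ i j : Fin n, IntegrableOn (fun t => A t i j) (Set.Icc c d))
    (hcoop : ∀ᵐ t : ℝ, a < (t : EReal) → (t : EReal) < b →
      ∀ i j : Fin n, i ≠ j → 0 ≤ A t i j)
    (x : ℝ → Fin n → ℝ)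
    (hxcont : ContinuousOn x {t : ℝ | a < (t : EReal) ∧ (t : EReal) < b})
    (hxsol : ∀ t₁ t₂ : ℝ, a < (t₁ : EReal) → (t₁ : EReal) < b →
      a < (t₂ : EReal) → (t₂ : EReal) < b →
      x t₂ = x t₁ + ∫ s in t₁..t₂, A s *ᵥ x s)
    (t₀ : ℝ) (ht₀a : a < (t₀ : EReal)) (ht₀b : (t₀ : EReal) < b)
    (hpos : ∀ i, 0 < x t₀ i) :
    ∀ t : ℝ, t₀ < t → (t : EReal) < b → ∀ i, 0 < x t i := by
  intro t htt₀ htb i₀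
  have ht₀t : t₀ ≤ t := htt₀.le
  have hsub : Set.Icc t₀ t ⊆ {s : ℝ | a < (s : EReal) ∧ (s : EReal) < b} := by
    intro s hs
    exact ⟨lt_of_lt_of_le ht₀a (EReal.coe_le_coe_iff.mpr hs.1),
      lt_of_le_of_lt (EReal.coe_le_coe_iff.mpr hs.2) htb⟩
  have hxc : ContinuousOn x (Set.Icc t₀ t) := hxcont.mono hsub
  have hxcj : ∀ j, ContinuousOn (fun s => x s j) (Set.Icc t₀ t) :=
    fun j => (continuous_apply j).comp_continuousOn hxc
  -- integrability of the components of A *ᵥ x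
  have hgrep : ∀ i : Fin n, (fun s => (A s *ᵥ x s) i) = fun s => ∑ j, A s i j * x s j := by
    intro i; funext s; simp [Matrix.mulVec, dotProduct]
  have hgint : ∀ i : Fin n, IntegrableOn (fun s => (A s *ᵥ x s) i) (Set.Icc t₀ t) := by
    intro i
    rw [hgrep i]
    apply integrable_finset_sum
    intro j _
    exact (hAint t₀ t ht₀a htb ht₀t i j).mul_continuousOn (hxcj j) isCompact_Icc
  have hIg : ∀ i : Fin n, ∀ p ∈ Set.Icc t₀ t, ∀ q ∈ Set.Icc t₀ t,
      IntervalIntegrable (fun s => (A s *ᵥ x s) i) volume p q :=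
    fun i p hp q hq => ((hgint i).mono_set (Set.uIcc_subset_Icc hp hq)).intervalIntegrable
  -- interval integrability of the vector function
  have hvrep : (fun s => A s *ᵥ x s) =
      fun s => ∑ j : Fin n, ((A s *ᵥ x s) j) • (Pi.single j (1:ℝ) : Fin n → ℝ) := by
    funext s
    funext k
    simp [Finset.sum_apply, Pi.single_apply]
  have hvint : IntegrableOn (fun s => A s *ᵥ x s) (Set.Icc t₀ t) := by
    rw [hvrep]
    apply integrable_finset_sum
    intro j _
    exact ((hgint j).smul_const _)
  have hvII : ∀ p ∈ Set.Icc t₀ t, ∀ q ∈ Set.Icc t₀ t,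
      IntervalIntegrable (fun s => A s *ᵥ x s) volume p q :=
    fun p hp q hq => (hvint.mono_set (Set.uIcc_subset_Icc hp hq)).intervalIntegrable
  -- coordinates commute with the interval integral
  have hproj : ∀ p ∈ Set.Icc t₀ t, ∀ q ∈ Set.Icc t₀ t, ∀ i : Fin n,
      (∫ s in p..q, A s *ᵥ x s) i = ∫ s in p..q, (A s *ᵥ x s) i := by
    intro p hp q hq i
    have h := (ContinuousLinearMap.proj (R := ℝ) (φ := fun _ : Fin n => ℝ)
      i).intervalIntegral_comp_comm (hvII p hp q hq)
    simpa using h.symm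
  -- scalar form of the solution identity
  have hfsol : ∀ i : Fin n, ∀ p ∈ Set.Icc t₀ t, ∀ q ∈ Set.Icc t₀ t,
      x q i = x p i + ∫ s in p..q, (A s *ᵥ x s) i := by
    intro i p hp q hq
    have h := hxsol p q (hsub hp).1 (hsub hp).2 (hsub hq).1 (hsub hq).2
    have h2 := congrFun h i
    rw [Pi.add_apply] at h2
    rw [h2, hproj p hp q hq i]
  -- the bad set
  by_contra hcon
  push_neg at hcon
  set B : Set ℝ := {s ∈ Set.Icc t₀ t | ∃ i, x s i ≤ 0} with hBdef
  have hBne : B.Nonempty := ⟨t, ⟨Set.right_mem_Icc.mpr ht₀t, ⟨i₀, hcon⟩⟩⟩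
  have hBbdd : BddBelow B := ⟨t₀, fun s hs => hs.1.1⟩
  have hBclosed : IsClosed B := by
    have : B = ⋃ i : Fin n, (Set.Icc t₀ t ∩ (fun s => x s i) ⁻¹' Set.Iic 0) := by
      ext s
      simp only [hBdef, Set.mem_setOf_eq, Set.mem_iUnion, Set.mem_inter_iff,
        Set.mem_preimage, Set.mem_Iic]
      tauto
    rw [this]
    exact isClosed_iUnion_of_finite (fun i =>
      (hxcj i).preimage_isClosed_of_isClosed isClosed_Icc isClosed_Iic)
  set τ : ℝ := sInf B with hτdef
  have hτB : τ ∈ B := hBclosed.csInf_mem hBne hBbdd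
  have hτIcc : τ ∈ Set.Icc t₀ t := hτB.1
  have hpos' : ∀ s ∈ Set.Ico t₀ τ, ∀ j, 0 < x s j := by
    intro s hs j
    have hsB : s ∉ B := notMem_of_lt_csInf hs.2 hBbdd
    have hsIcc : s ∈ Set.Icc t₀ t := ⟨hs.1, hs.2.le.trans hτIcc.2⟩
    by_contra hle
    push_neg at hle
    exact hsB ⟨hsIcc, ⟨j, hle⟩⟩
  have hnn : ∀ s ∈ Set.Icc t₀ τ, ∀ j, 0 ≤ x s j := by
    intro s hs j
    rcases lt_or_eq_of_le hs.2 with hlt | heq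
    · exact (hpos' s ⟨hs.1, hlt⟩ j).le
    · rw [heq]
      rcases eq_or_lt_of_le hτIcc.1 with ht₀τ | ht₀τ
      · rw [← ht₀τ]; exact (hpos j).le
      · have hsub2 : Set.Ico t₀ τ ⊆ Set.Icc t₀ t := fun v hv =>
          ⟨hv.1, hv.2.le.trans hτIcc.2⟩
        have hD : ContinuousWithinAt (fun v => x v j) (Set.Ico t₀ τ) τ :=
          ((hxcj j) τ hτIcc).mono hsub2
        exact le_at_right_endpoint ht₀τ hD (fun v hv => (hpos' v hv j).le)
  obtain ⟨i, hi⟩ := hτB.2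
  -- apply the Grönwall lemma to coordinate i on [t₀, τ]
  have hIccsub : Set.Icc t₀ τ ⊆ Set.Icc t₀ t := fun v hv => ⟨hv.1, hv.2.trans hτIcc.2⟩
  have hKint : IntegrableOn (fun u => |A u i i|) (Set.Icc t₀ τ) :=
    ((hAint t₀ t ht₀a htb ht₀t i i).mono_set hIccsub).abs
  have hf : ∀ s ∈ Set.Icc t₀ τ, x s i = x t₀ i + ∫ u in t₀..s, (A u *ᵥ x u) i := by
    intro s hs
    exact hfsol i t₀ (Set.left_mem_Icc.mpr ht₀t) s (hIccsub hs)
  have hineq : ∀ᵐ u : ℝ, u ∈ Set.Icc t₀ τ → -(|A u i i| * x u i) ≤ (A u *ᵥ x u) i := by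
    filter_upwards [hcoop] with u hu huIcc
    have huS := hsub (hIccsub huIcc)
    have hcoopu := hu huS.1 huS.2
    have hxnn : ∀ j, 0 ≤ x u j := hnn u huIcc
    have hsum : (A u *ᵥ x u) i = ∑ j, A u i j * x u j := by
      simp [Matrix.mulVec, dotProduct]
    have hsplit : ∑ j, A u i j * x u j
        = A u i i * x u i + ∑ j ∈ Finset.univ.erase i, A u i j * x u j := by
      rw [← Finset.add_sum_erase _ _ (Finset.mem_univ i)]
    have hrest : 0 ≤ ∑ j ∈ Finset.univ.erase i, A u i j * x u j := by
      apply Finset.sum_nonneg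
      intro j hj
      exact mul_nonneg (hcoopu i j (Finset.ne_of_mem_erase hj).symm) (hxnn j)
    have hdiag : -(|A u i i| * x u i) ≤ A u i i * x u i := by
      have : -|A u i i| ≤ A u i i := neg_abs_le _
      have h2 := mul_le_mul_of_nonneg_right this (hxnn i)
      calc -(|A u i i| * x u i) = -|A u i i| * x u i := by ring
        _ ≤ A u i i * x u i := h2
    rw [hsum, hsplit]
    linarith
  have hposτ : 0 < x τ i :=
    gronwall_pos hτIcc.1 ((hgint i).mono_set hIccsub) hKint
      (fun u => abs_nonneg _) hf hineq (hpos i)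
  exact absurd hi (not_le.mpr hposτ)
end
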